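/- Let G be a topological group and let μ, ν ∈ Meas(rG) be nonzero and multiplicative, i.e., μ(f·g) = μ(f)·μ(g) and ν(f·g) = ν(f)·ν(g) for all f, g ∈ Ub(rG), where f·g is the pointwise product. Then μ ⋆ ν is nonzero and multiplicative. Moreover, if in addition μ and ν are uniform measures, then μ ⋆ ν is a uniform measure. (Thus the uniform compactification of rG, and its completion, are closed under convolution.) -/

import Mathlib

noncomputable section

open Filter Topology

/-- `f` is a bounded uniformly continuous real-valued function,
i.e. a member of `Ub(X)`. -/
def IsUb {X : Type*} [UniformSpace X] (f : X → ℝ) : Prop :=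
  UniformContinuous f ∧ ∃ C : ℝ, ∀ x, |f x| ≤ C

/-- Supremum norm of a real-valued function. -/
def supNorm {α : Type*} (f : α → ℝ) : ℝ :=
  sSup (Set.range fun x => |f x|)

/-- `μ` is (the restriction to `Ub(X)` of) a norm-continuous linear functional on `Ub(X)`,
i.e. a member of `Meas(X)`.  It is represented as a bare map on all functions;
only its values on `Ub(X)` are relevant. -/
def IsMeas {X : Type*} [UniformSpace X] (μ : (X → ℝ) → ℝ) : Prop :=
  (∀ f g : X → ℝ, IsUb f → IsUb g → μ (f + g) = μ f + μ g) ∧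
  (∀ (c : ℝ) (f : X → ℝ), IsUb f → μ (c • f) = c * μ f) ∧
  (∃ C : ℝ, ∀ f : X → ℝ, IsUb f → (∀ x, |f x| ≤ 1) → |μ f| ≤ C)

/-- The dual norm on `Meas(X)`:  `‖μ‖ = sup {|μ f| : f ∈ Ub(X), ‖f‖ ≤ 1}`. -/
def measNorm {X : Type*} [UniformSpace X] (μ : (X → ℝ) → ℝ) : ℝ :=
  sSup {r : ℝ | ∃ f : X → ℝ, IsUb f ∧ (∀ x, |f x| ≤ 1) ∧ r = |μ f|}

/-- `μ` is a positive functional:  `μ f ≥ 0` whenever `f ∈ Ub(X)` and `f ≥ 0`. -/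
def IsPositive {X : Type*} [UniformSpace X] (μ : (X → ℝ) → ℝ) : Prop :=
  ∀ f : X → ℝ, IsUb f → (∀ x, 0 ≤ f x) → 0 ≤ μ f

/-- `μ` is a *uniform measure*: on every norm-bounded uniformly equicontinuous set
`H ⊆ Ub(X)`, `μ` is continuous for the topology of pointwise convergence. -/
def IsUniformMeasure {X : Type*} [UniformSpace X] (μ : (X → ℝ) → ℝ) : Prop :=
  ∀ H : Set (X → ℝ),
    (∃ C : ℝ, ∀ f ∈ H, ∀ x, |f x| ≤ C) →
    H.UniformEquicontinuous →
    ∀ f₀ ∈ H, ∀ ε : ℝ, 0 < ε →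
      ∃ (K : Finset X) (δ : ℝ), 0 < δ ∧
        ∀ f ∈ H, (∀ x ∈ K, |f x - f₀ x| < δ) → |μ f - μ f₀| < ε

/-- A *semiuniform* function on `X × Y`, i.e. a member of `Ub(X ⋉ Y)` where `X ⋉ Y` is the
semiuniform product: `f` is bounded, the family of sections `x ↦ f (x, y)` (for `y ∈ Y`)
is uniformly equicontinuous on `X`, and every section `y ↦ f (x, y)` is uniformly
continuous on `Y`. -/
def Semiuniform {X Y : Type*} [UniformSpace X] [UniformSpace Y] (f : X × Y → ℝ) : Prop :=
  (∃ C : ℝ, ∀ p, |f p| ≤ C) ∧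
  UniformEquicontinuous (fun y : Y => fun x : X => f (x, y)) ∧
  ∀ x : X, UniformContinuous fun y : Y => f (x, y)

/-- The direct product `μ ⊗ ν`, evaluated at `f : X × Y → ℝ`:
`(μ ⊗ ν)(f) = μ (x ↦ ν (y ↦ f (x, y)))`. -/
def dirProd {X Y : Type*} (μ : (X → ℝ) → ℝ) (ν : (Y → ℝ) → ℝ) (f : X × Y → ℝ) : ℝ :=
  μ fun x => ν fun y => f (x, y)

/-- Convolution: `(μ ⋆ ν)(f) = μ (x ↦ ν (y ↦ f (x · y)))`. -/
def conv {G : Type*} [Mul G] (μ ν : (G → ℝ) → ℝ) : (G → ℝ) → ℝ :=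
  fun f => μ fun x => ν fun y => f (x * y)

/-- The weak-* topology on `Meas(X)`: the topology of pointwise convergence on `Ub(X)`. -/
def weakStarMeas (X : Type*) [UniformSpace X] :
    TopologicalSpace {ν : (X → ℝ) → ℝ // IsMeas ν} :=
  TopologicalSpace.induced
    (fun ν => fun f : {f : X → ℝ // IsUb f} => ν.1 f.1) Pi.topologicalSpace

open scoped Uniformity

lemma ucR_iff {X : Type*} [UniformSpace X] {f : X → ℝ} :
    UniformContinuous f ↔ ∀ ε > (0:ℝ), ∃ U ∈ 𝓤 X, ∀ p : X × X, p ∈ U → |f p.2 - f p.1| < ε := by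
  constructor
  · intro hf ε hε
    have h1 : {q : ℝ × ℝ | dist q.1 q.2 < ε} ∈ 𝓤 ℝ := Metric.dist_mem_uniformity hε
    have h2 := hf h1
    rw [Filter.mem_map] at h2
    refine ⟨_, h2, fun p hp => ?_⟩
    have : dist (f p.1) (f p.2) < ε := hp
    rwa [Real.dist_eq, abs_sub_comm] at this
  · intro h
    rw [uniformContinuous_def]
    intro r hr
    obtain ⟨ε, hε, hεr⟩ := Metric.mem_uniformity_dist.mp hr
    obtain ⟨U, hU, hU2⟩ := h ε hε
    refine Filter.mem_of_superset hU fun p hp => ?_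
    exact hεr (by rw [Real.dist_eq, abs_sub_comm]; exact hU2 p hp)

lemma ucG_iff {G : Type*} [Group G] [UniformSpace G]
    (h𝓤 : 𝓤 G = Filter.comap (fun p : G × G => p.2 / p.1) (𝓝 1)) {f : G → ℝ} :
    UniformContinuous f ↔
      ∀ ε > (0:ℝ), ∃ V ∈ 𝓝 (1:G), ∀ a b : G, b / a ∈ V → |f b - f a| < ε := by
  rw [ucR_iff]
  constructor
  · intro h ε hε
    obtain ⟨U, hU, hU2⟩ := h ε hε
    rw [h𝓤, Filter.mem_comap] at hU
    obtain ⟨V, hV, hVU⟩ := hU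
    exact ⟨V, hV, fun a b hab => hU2 (a, b) (hVU hab)⟩
  · intro h ε hε
    obtain ⟨V, hV, hV2⟩ := h ε hε
    refine ⟨(fun p : G × G => p.2 / p.1) ⁻¹' V, ?_, fun p hp => hV2 p.1 p.2 hp⟩
    rw [h𝓤]; exact Filter.preimage_mem_comap hV

lemma ueG_iff {G : Type*} [Group G] [UniformSpace G] {ι : Type*}
    (h𝓤 : 𝓤 G = Filter.comap (fun p : G × G => p.2 / p.1) (𝓝 1)) {F : ι → G → ℝ} :
    UniformEquicontinuous F ↔
      ∀ ε > (0:ℝ), ∃ V ∈ 𝓝 (1:G), ∀ a b : G, b / a ∈ V → ∀ i, |F i b - F i a| < ε := by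
  constructor
  · intro h ε hε
    have h1 : {q : ℝ × ℝ | dist q.1 q.2 < ε} ∈ 𝓤 ℝ := Metric.dist_mem_uniformity hε
    have h2 := h _ h1
    rw [Filter.eventually_iff, h𝓤, Filter.mem_comap] at h2
    obtain ⟨V, hV, hVU⟩ := h2
    refine ⟨V, hV, fun a b hab i => ?_⟩
    have : dist (F i a) (F i b) < ε := hVU (show ((a,b) : G × G).2 / (a,b).1 ∈ V from hab) i
    rwa [Real.dist_eq, abs_sub_comm] at this
  · intro h U hU
    obtain ⟨ε, hε, hεr⟩ := Metric.mem_uniformity_dist.mp hU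
    obtain ⟨V, hV, hV2⟩ := h ε hε
    rw [Filter.eventually_iff]
    refine Filter.mem_of_superset (by rw [h𝓤]; exact Filter.preimage_mem_comap hV) ?_
    rintro ⟨a, b⟩ hab i
    exact hεr (by rw [Real.dist_eq, abs_sub_comm]; exact hV2 a b hab i)

lemma isUb_const {X : Type*} [UniformSpace X] (c : ℝ) : IsUb (fun _ : X => c) :=
  ⟨uniformContinuous_const, |c|, fun _ => le_refl _⟩

lemma IsUb.add {X : Type*} [UniformSpace X] {f g : X → ℝ} (hf : IsUb f) (hg : IsUb g) :
    IsUb (f + g) := by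
  obtain ⟨hfc, Cf, hCf⟩ := hf
  obtain ⟨hgc, Cg, hCg⟩ := hg
  exact ⟨hfc.add hgc, Cf + Cg, fun x => (abs_add_le _ _).trans (add_le_add (hCf x) (hCg x))⟩

lemma IsUb.smul {X : Type*} [UniformSpace X] {f : X → ℝ} (hf : IsUb f) (c : ℝ) :
    IsUb (c • f) := by
  obtain ⟨hfc, Cf, hCf⟩ := hf
  refine ⟨?_, |c| * Cf, fun x => ?_⟩
  · exact hfc.const_smul c
  · show |c * f x| ≤ _
    rw [abs_mul]
    exact mul_le_mul_of_nonneg_left (hCf x) (abs_nonneg c)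

lemma IsUb.sub {X : Type*} [UniformSpace X] {f g : X → ℝ} (hf : IsUb f) (hg : IsUb g) :
    IsUb (f - g) := by
  have h : f - g = f + (-1 : ℝ) • g := by funext x; simp; ring
  rw [h]; exact hf.add (hg.smul (-1))

lemma IsUb.mul {X : Type*} [UniformSpace X] {f g : X → ℝ} (hf : IsUb f) (hg : IsUb g) :
    IsUb (f * g) := by
  obtain ⟨hfc, Cf, hCf⟩ := hf
  obtain ⟨hgc, Cg, hCg⟩ := hg
  set M : ℝ := max Cf (max Cg 1) with hM
  have hM1 : (1:ℝ) ≤ M := le_max_of_le_right (le_max_right _ _)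
  have hM0 : (0:ℝ) < M := lt_of_lt_of_le one_pos hM1
  have hfM : ∀ x, |f x| ≤ M := fun x => (hCf x).trans (le_max_left _ _)
  have hgM : ∀ x, |g x| ≤ M := fun x => (hCg x).trans (le_max_of_le_right (le_max_left _ _))
  constructor
  · rw [ucR_iff]
    intro ε hε
    have hε2 : 0 < ε / (2 * M + 1) := by positivity
    obtain ⟨Uf, hUf, hUf2⟩ := ucR_iff.mp hfc _ hε2
    obtain ⟨Ug, hUg, hUg2⟩ := ucR_iff.mp hgc _ hε2
    refine ⟨Uf ∩ Ug, Filter.inter_mem hUf hUg, fun p hp => ?_⟩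
    have h1 := hUf2 p hp.1
    have h2 := hUg2 p hp.2
    have key : f p.2 * g p.2 - f p.1 * g p.1
        = f p.2 * (g p.2 - g p.1) + g p.1 * (f p.2 - f p.1) := by ring
    show |f p.2 * g p.2 - f p.1 * g p.1| < ε
    rw [key]
    calc |f p.2 * (g p.2 - g p.1) + g p.1 * (f p.2 - f p.1)|
        ≤ |f p.2 * (g p.2 - g p.1)| + |g p.1 * (f p.2 - f p.1)| := abs_add_le _ _
      _ = |f p.2| * |g p.2 - g p.1| + |g p.1| * |f p.2 - f p.1| := by rw [abs_mul, abs_mul]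
      _ ≤ M * (ε / (2 * M + 1)) + M * (ε / (2 * M + 1)) := by
          apply add_le_add
          · exact mul_le_mul (hfM _) (le_of_lt h2) (abs_nonneg _) (le_of_lt hM0)
          · exact mul_le_mul (hgM _) (le_of_lt h1) (abs_nonneg _) (le_of_lt hM0)
      _ = 2 * M * ε / (2 * M + 1) := by ring
      _ < ε := by rw [div_lt_iff₀ (by positivity)]; nlinarith
  · refine ⟨M * M, fun x => ?_⟩
    show |f x * g x| ≤ M * M
    rw [abs_mul]
    exact mul_le_mul (hfM x) (hgM x) (abs_nonneg _) (le_of_lt hM0)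

lemma IsMeas.bound {X : Type*} [UniformSpace X] {ν : (X → ℝ) → ℝ} (hν : IsMeas ν) :
    ∃ C : ℝ, 0 ≤ C ∧ ∀ h : X → ℝ, IsUb h → ∀ c : ℝ, 0 < c → (∀ x, |h x| ≤ c) → |ν h| ≤ C * c := by
  obtain ⟨C0, hC0⟩ := hν.2.2
  refine ⟨max C0 0, le_max_right _ _, fun h hh c hc hb => ?_⟩
  have hh' : IsUb (c⁻¹ • h) := hh.smul c⁻¹
  have hb' : ∀ x, |(c⁻¹ • h) x| ≤ 1 := by
    intro x
    show |c⁻¹ * h x| ≤ 1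
    rw [abs_mul, abs_inv, abs_of_pos hc, inv_mul_le_iff₀ hc, mul_one]
    exact hb x
  have h1 : |ν (c⁻¹ • h)| ≤ C0 := hC0 _ hh' hb'
  have h2 : ν h = c * ν (c⁻¹ • h) := by
    rw [← hν.2.1 c _ hh']
    congr 1
    funext x
    show h x = c * (c⁻¹ * h x)
    field_simp
  rw [h2, abs_mul, abs_of_pos hc]
  have h3 : |ν (c⁻¹ • h)| ≤ max C0 0 := h1.trans (le_max_left _ _)
  nlinarith [abs_nonneg (ν (c⁻¹ • h))]

lemma IsMeas.sub {X : Type*} [UniformSpace X] {ν : (X → ℝ) → ℝ} (hν : IsMeas ν)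
    {f g : X → ℝ} (hf : IsUb f) (hg : IsUb g) : ν (f - g) = ν f - ν g := by
  have h : f - g = f + (-1 : ℝ) • g := by funext x; simp; ring
  rw [h, hν.1 f _ hf (hg.smul (-1)), hν.2.1 (-1) g hg]
  ring

lemma isUb_translate {G : Type*} [Group G] [UniformSpace G]
    (h𝓤 : 𝓤 G = Filter.comap (fun p : G × G => p.2 / p.1) (𝓝 1))
    (hconj : ∀ x : G, ∀ V ∈ 𝓝 (1:G), (fun g : G => x * g * x⁻¹) ⁻¹' V ∈ 𝓝 (1:G))
    {f : G → ℝ} (hf : IsUb f) (x : G) : IsUb (fun y => f (x * y)) := by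
  obtain ⟨hfc, C, hC⟩ := hf
  refine ⟨?_, C, fun y => hC _⟩
  rw [ucG_iff h𝓤] at hfc ⊢
  intro ε hε
  obtain ⟨V, hV, hV2⟩ := hfc ε hε
  refine ⟨_, hconj x V hV, fun a b hab => ?_⟩
  have hgrp : (x * b) / (x * a) = x * (b / a) * x⁻¹ := by simp [div_eq_mul_inv, mul_inv_rev, mul_assoc]
  exact hV2 (x * a) (x * b) (by rw [hgrp]; exact hab)

lemma isUb_T {G : Type*} [Group G] [UniformSpace G]
    (h𝓤 : 𝓤 G = Filter.comap (fun p : G × G => p.2 / p.1) (𝓝 1))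
    (hconj : ∀ x : G, ∀ V ∈ 𝓝 (1:G), (fun g : G => x * g * x⁻¹) ⁻¹' V ∈ 𝓝 (1:G))
    {ν : (G → ℝ) → ℝ} (hν : IsMeas ν)
    {f : G → ℝ} (hf : IsUb f) : IsUb (fun x => ν fun y => f (x * y)) := by
  obtain ⟨C, hC0, hCb⟩ := hν.bound
  obtain ⟨hfc, B, hB⟩ := id hf
  have hB0 : 0 ≤ B := (abs_nonneg _).trans (hB 1)
  constructor
  · rw [ucG_iff h𝓤]
    intro ε hε
    have hε' : 0 < ε / (C + 1) := by positivity
    obtain ⟨V, hV, hV2⟩ := (ucG_iff h𝓤).mp hfc _ hε'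
    refine ⟨V, hV, fun a b hab => ?_⟩
    have hUa := isUb_translate h𝓤 hconj hf a
    have hUb := isUb_translate h𝓤 hconj hf b
    have hsub : IsUb ((fun y => f (b * y)) - fun y => f (a * y)) := hUb.sub hUa
    have hpt : ∀ y, |((fun y => f (b * y)) - fun y => f (a * y)) y| ≤ ε / (C + 1) := by
      intro y
      show |f (b * y) - f (a * y)| ≤ _
      have hgrp : (b * y) / (a * y) = b / a := by simp [div_eq_mul_inv, mul_inv_rev, mul_assoc]
      exact le_of_lt (hV2 (a * y) (b * y) (by rw [hgrp]; exact hab))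
    have hbound := hCb _ hsub _ hε' hpt
    rw [hν.sub hUb hUa] at hbound
    calc |ν (fun y => f (b * y)) - ν (fun y => f (a * y))| ≤ C * (ε / (C + 1)) := hbound
      _ < ε := by rw [mul_div_assoc', div_lt_iff₀ (by positivity)]; nlinarith
  · refine ⟨C * (B + 1), fun x => ?_⟩
    exact hCb _ (isUb_translate h𝓤 hconj hf x) (B + 1) (by linarith)
      (fun y => (hB _).trans (by linarith))

theorem stmt19 {G : Type*} [Group G] [TopologicalSpace G] [IsTopologicalGroup G] :
    letI : UniformSpace G := IsTopologicalGroup.rightUniformSpace G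
    ∀ μ ν : (G → ℝ) → ℝ, IsMeas μ → IsMeas ν →
      (∃ f : G → ℝ, IsUb f ∧ μ f ≠ 0) → (∃ f : G → ℝ, IsUb f ∧ ν f ≠ 0) →
      (∀ f g : G → ℝ, IsUb f → IsUb g → μ (f * g) = μ f * μ g) →
      (∀ f g : G → ℝ, IsUb f → IsUb g → ν (f * g) = ν f * ν g) →
      ((∃ f : G → ℝ, IsUb f ∧ conv μ ν f ≠ 0) ∧
        (∀ f g : G → ℝ, IsUb f → IsUb g →
          conv μ ν (f * g) = conv μ ν f * conv μ ν g) ∧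
        (IsUniformMeasure μ → IsUniformMeasure ν → IsUniformMeasure (conv μ ν))) := by
  letI : UniformSpace G := IsTopologicalGroup.rightUniformSpace G
  intro μ ν hμ hν hμne hνne hmμ hmν
  classical
  have h𝓤 : 𝓤 G = Filter.comap (fun p : G × G => p.2 / p.1) (𝓝 1) := by
    simp only [div_eq_mul_inv]; rfl
  have hconj : ∀ x : G, ∀ V ∈ 𝓝 (1:G), (fun g : G => x * g * x⁻¹) ⁻¹' V ∈ 𝓝 (1:G) := by
    intro x V hV
    have hc : Continuous fun g : G => x * g * x⁻¹ :=
      (continuous_const.mul continuous_id).mul continuous_const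
    have h1 : x * (1:G) * x⁻¹ = 1 := by simp
    exact hc.continuousAt.preimage_mem_nhds (by rw [h1]; exact hV)
  obtain ⟨fμ, hfμ, hμ0⟩ := hμne
  obtain ⟨fν, hfν, hν0⟩ := hνne
  have h1ub : IsUb (1 : G → ℝ) := ⟨uniformContinuous_const, 1, by intro x; norm_num⟩
  have hμ1 : μ 1 = 1 := by
    have h := hmμ fμ 1 hfμ h1ub
    rw [mul_one] at h
    exact (mul_left_cancel₀ hμ0 (by rw [mul_one]; exact h)).symm
  have hν1 : ν 1 = 1 := by
    have h := hmν fν 1 hfν h1ub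
    rw [mul_one] at h
    exact (mul_left_cancel₀ hν0 (by rw [mul_one]; exact h)).symm
  refine ⟨⟨1, h1ub, ?_⟩, ?_, ?_⟩
  · show μ (fun x => ν fun y => (1 : G → ℝ) (x * y)) ≠ 0
    have heq : (fun x : G => ν fun y => (1 : G → ℝ) (x * y)) = (1 : G → ℝ) := by
      funext x
      exact hν1
    rw [heq, hμ1]
    exact one_ne_zero
  · intro f g hf hg
    have hTf : IsUb (fun x => ν fun y => f (x * y)) := isUb_T h𝓤 hconj hν hf
    have hTg : IsUb (fun x => ν fun y => g (x * y)) := isUb_T h𝓤 hconj hν hg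
    show μ (fun x => ν fun y => (f * g) (x * y)) = _
    have hstep : (fun x : G => ν fun y => (f * g) (x * y))
        = (fun x => ν fun y => f (x * y)) * fun x => ν fun y => g (x * y) := by
      funext x
      exact hmν _ _ (isUb_translate h𝓤 hconj hf x) (isUb_translate h𝓤 hconj hg x)
    rw [hstep]
    exact hmμ _ _ hTf hTg
  · intro hUμ hUν
    intro H hHb hHeq f₀ hf₀ ε hε
    obtain ⟨CH, hCH⟩ := hHb
    set CH1 : ℝ := max CH 1 with hCH1def
    have hCH1pos : (0:ℝ) < CH1 := lt_of_lt_of_le one_pos (le_max_right _ _)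
    have hCH1 : ∀ f ∈ H, ∀ x, |f x| ≤ CH1 := fun f hf x => (hCH f hf x).trans (le_max_left _ _)
    have hHub : ∀ f ∈ H, IsUb f := fun f hf =>
      ⟨hHeq.uniformContinuous ⟨f, hf⟩, CH, hCH f hf⟩
    obtain ⟨Cν, hCν0, hCνb⟩ := hν.bound
    set T : (G → ℝ) → G → ℝ := fun f x => ν fun y => f (x * y) with hTdef
    set TH : Set (G → ℝ) := T '' H with hTHdef
    have hTHb : ∃ C : ℝ, ∀ g ∈ TH, ∀ x, |g x| ≤ C := by
      refine ⟨Cν * CH1, ?_⟩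
      rintro g ⟨f, hfH, rfl⟩ x
      exact hCνb _ (isUb_translate h𝓤 hconj (hHub f hfH) x) CH1 hCH1pos
        (fun y => hCH1 f hfH _)
    have hTHeq : TH.UniformEquicontinuous := by
      refine (ueG_iff h𝓤).mpr ?_
      intro ε₁ hε₁
      have hε₂ : 0 < ε₁ / (Cν + 1) := by positivity
      obtain ⟨V, hV, hV2⟩ := (ueG_iff h𝓤).mp hHeq _ hε₂
      refine ⟨V, hV, fun a b hab i => ?_⟩
      obtain ⟨g, f, hfH, rfl⟩ := i
      show |T f b - T f a| < ε₁
      have hUa := isUb_translate h𝓤 hconj (hHub f hfH) a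
      have hUb := isUb_translate h𝓤 hconj (hHub f hfH) b
      have hsub : IsUb ((fun y => f (b * y)) - fun y => f (a * y)) := hUb.sub hUa
      have hpt : ∀ y, |((fun y => f (b * y)) - fun y => f (a * y)) y| ≤ ε₁ / (Cν + 1) := by
        intro y
        show |f (b * y) - f (a * y)| ≤ _
        have hgrp : (b * y) / (a * y) = b / a := by
          simp [div_eq_mul_inv, mul_inv_rev, mul_assoc]
        exact le_of_lt (hV2 (a * y) (b * y) (by rw [hgrp]; exact hab) ⟨f, hfH⟩)
      have hbound := hCνb _ hsub _ hε₂ hpt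
      rw [hν.sub hUb hUa] at hbound
      calc |T f b - T f a| ≤ Cν * (ε₁ / (Cν + 1)) := hbound
        _ < ε₁ := by rw [mul_div_assoc', div_lt_iff₀ (by positivity)]; nlinarith
    have hTf₀ : T f₀ ∈ TH := ⟨f₀, hf₀, rfl⟩
    obtain ⟨K, δ₁, hδ₁, hK⟩ := hUμ TH hTHb hTHeq (T f₀) hTf₀ ε hε
    have hx : ∀ x : G, ∃ (Kx : Finset G) (δx : ℝ), 0 < δx ∧
        ∀ f ∈ H, (∀ y ∈ Kx, |f (x * y) - f₀ (x * y)| < δx) → |T f x - T f₀ x| < δ₁ := by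
      intro x
      set Hx : Set (G → ℝ) := (fun f : G → ℝ => fun y : G => f (x * y)) '' H with hHxdef
      have hHxb : ∃ C : ℝ, ∀ g ∈ Hx, ∀ y, |g y| ≤ C := by
        refine ⟨CH, ?_⟩
        rintro g ⟨f, hfH, rfl⟩ y
        exact hCH f hfH _
      have hHxeq : Hx.UniformEquicontinuous := by
        refine (ueG_iff h𝓤).mpr ?_
        intro ε₁ hε₁
        obtain ⟨V, hV, hV2⟩ := (ueG_iff h𝓤).mp hHeq ε₁ hε₁
        refine ⟨_, hconj x V hV, fun a b hab i => ?_⟩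
        obtain ⟨g, f, hfH, rfl⟩ := i
        show |f (x * b) - f (x * a)| < ε₁
        have hgrp : (x * b) / (x * a) = x * (b / a) * x⁻¹ := by
          simp [div_eq_mul_inv, mul_inv_rev, mul_assoc]
        exact hV2 (x * a) (x * b) (by rw [hgrp]; exact hab) ⟨f, hfH⟩
      obtain ⟨Kx, δx, hδx, hKx⟩ :=
        hUν Hx hHxb hHxeq (fun y => f₀ (x * y)) ⟨f₀, hf₀, rfl⟩ δ₁ hδ₁
      exact ⟨Kx, δx, hδx, fun f hfH hcl => hKx _ ⟨f, hfH, rfl⟩ hcl⟩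
    choose Kx δx hδxpos hδxprop using hx
    set S : Finset ℝ := insert (1:ℝ) (K.image δx) with hSdef
    have hSne : S.Nonempty := ⟨1, Finset.mem_insert_self _ _⟩
    set δ : ℝ := S.min' hSne with hδdef
    have hδpos : 0 < δ := by
      have hmem := S.min'_mem hSne
      have hall : ∀ z ∈ S, (0:ℝ) < z := by
        intro z hz
        rcases Finset.mem_insert.mp hz with h | h
        · rw [h]; norm_num
        · obtain ⟨w, _, hw⟩ := Finset.mem_image.mp h
          rw [← hw]; exact hδxpos w
      exact hall _ hmem
    refine ⟨K.biUnion (fun x => (Kx x).image (fun y => x * y)), δ, hδpos, ?_⟩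
    intro f hfH hclose
    have hKclose : ∀ x ∈ K, |T f x - T f₀ x| < δ₁ := by
      intro x hxK
      apply hδxprop x f hfH
      intro y hy
      have hmem : x * y ∈ K.biUnion (fun x => (Kx x).image (fun y => x * y)) :=
        Finset.mem_biUnion.mpr ⟨x, hxK, Finset.mem_image.mpr ⟨y, hy, rfl⟩⟩
      have h1 := hclose _ hmem
      have h2 : δ ≤ δx x :=
        Finset.min'_le _ _ (Finset.mem_insert_of_mem (Finset.mem_image_of_mem δx hxK))
      linarith
    exact hK (T f) ⟨f, hfH, rfl⟩ hKclose
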